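/- Let Λ be a lattice with minimum m in a Euclidean space E, and let x, y ∈ Λ be nonzero vectors with y ≠ x, y ≠ −x, y ≡ x (mod 2), and N(x) + N(y) = 4m. Then the vectors e = (y−x)/2 and f = (y+x)/2 belong to Λ and have norm N(e) = N(f) = m (i.e. they are minimal vectors of Λ), and ⟨x,y⟩ = 0. -/
import Mathlib


open scoped InnerProductSpace

/-- Let `Λ` be a lattice with minimum `m`, and let `x, y ∈ Λ` be nonzero
with `y ≠ ±x`, `y ≡ x (mod 2)` and `N(x) + N(y) = 4m`. Then `e = (y−x)/2` and
`f = (y+x)/2` belong to `Λ`, are minimal vectors (`N(e) = N(f) = m`), and `⟨x,y⟩ = 0`. -/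
theorem half_sum_half_diff_minimal
    {E : Type*} [NormedAddCommGroup E] [InnerProductSpace ℝ E] [FiniteDimensional ℝ E]
    (Λ : AddSubgroup E) (hdisc : DiscreteTopology Λ) (m : ℝ)
    (hmin : IsLeast {r : ℝ | ∃ x ∈ Λ, x ≠ 0 ∧ ⟪x, x⟫_ℝ = r} m)
    (x y : E) (hx : x ∈ Λ) (hy : y ∈ Λ)
    (hx0 : x ≠ 0) (hy0 : y ≠ 0) (hyx : y ≠ x) (hyx' : y ≠ -x)
    (hcong : ∃ z ∈ Λ, y - x = (2 : ℝ) • z)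
    (hsum : ⟪x, x⟫_ℝ + ⟪y, y⟫_ℝ = 4 * m) :
    (2 : ℝ)⁻¹ • (y - x) ∈ Λ ∧ (2 : ℝ)⁻¹ • (y + x) ∈ Λ ∧
      ⟪(2 : ℝ)⁻¹ • (y - x), (2 : ℝ)⁻¹ • (y - x)⟫_ℝ = m ∧
      ⟪(2 : ℝ)⁻¹ • (y + x), (2 : ℝ)⁻¹ • (y + x)⟫_ℝ = m ∧
      ⟪x, y⟫_ℝ = 0 := by
  obtain ⟨z, hz, heq⟩ := hcong
  have hez : (2 : ℝ)⁻¹ • (y - x) = z := by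
    rw [heq, smul_smul]; norm_num
  have he : (2 : ℝ)⁻¹ • (y - x) ∈ Λ := hez ▸ hz
  have hfz : (2 : ℝ)⁻¹ • (y + x) = z + x := by
    have : y + x = (y - x) + (2 : ℝ) • x := by
      rw [two_smul]; abel
    rw [this, smul_add, hez.symm]
    congr 1
    rw [smul_smul]; norm_num
  have hf : (2 : ℝ)⁻¹ • (y + x) ∈ Λ := hfz ▸ Λ.add_mem hz hx
  have hene : (2 : ℝ)⁻¹ • (y - x) ≠ 0 := by
    simp only [smul_ne_zero_iff, sub_ne_zero]
    exact ⟨by norm_num, hyx⟩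
  have hfne : (2 : ℝ)⁻¹ • (y + x) ≠ 0 := by
    simp only [smul_ne_zero_iff]
    refine ⟨by norm_num, fun h => hyx' ?_⟩
    rw [add_eq_zero_iff_eq_neg] at h
    exact h
  have hle : m ≤ ⟪(2 : ℝ)⁻¹ • (y - x), (2 : ℝ)⁻¹ • (y - x)⟫_ℝ :=
    hmin.2 ⟨_, he, hene, rfl⟩
  have hlf : m ≤ ⟪(2 : ℝ)⁻¹ • (y + x), (2 : ℝ)⁻¹ • (y + x)⟫_ℝ :=
    hmin.2 ⟨_, hf, hfne, rfl⟩
  have hco : ⟪y, x⟫_ℝ = ⟪x, y⟫_ℝ := real_inner_comm x y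
  have hE : ⟪(2 : ℝ)⁻¹ • (y - x), (2 : ℝ)⁻¹ • (y - x)⟫_ℝ
      = (2 : ℝ)⁻¹ * (2 : ℝ)⁻¹ * (⟪y, y⟫_ℝ - 2 * ⟪x, y⟫_ℝ + ⟪x, x⟫_ℝ) := by
    simp only [real_inner_smul_left, real_inner_smul_right, inner_sub_left,
      inner_sub_right, hco]
    ring
  have hF : ⟪(2 : ℝ)⁻¹ • (y + x), (2 : ℝ)⁻¹ • (y + x)⟫_ℝ
      = (2 : ℝ)⁻¹ * (2 : ℝ)⁻¹ * (⟪y, y⟫_ℝ + 2 * ⟪x, y⟫_ℝ + ⟪x, x⟫_ℝ) := by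
    simp only [real_inner_smul_left, real_inner_smul_right, inner_add_left,
      inner_add_right, hco]
    ring
  rw [hE] at hle; rw [hF] at hlf
  exact ⟨he, hf, by rw [hE]; linarith, by rw [hF]; linarith, by linarith⟩
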